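/- For every integer k ≥ 1 there exist real coefficients c_1, …, c_k with |c_i| ≤ 6^k · (2i + k)^k for all 1 ≤ i ≤ k, such that for every real x > 1/2 the k-th derivative of Ψ satisfies Ψ^{(k)}(x) = (Σ_{i=1}^{k} c_i / (2x−1)^{k+2i}) · Ψ(x). -/

import Mathlib

/-- Ψ(x) = 0 for x ≤ 1/2 and Ψ(x) = exp(1 − 1/(2x−1)²) for x > 1/2. -/
noncomputable def Psi (x : ℝ) : ℝ :=
  if x ≤ 1/2 then 0 else Real.exp (1 - 1/(2*x - 1)^2)

lemma psi_ev {x : ℝ} (hx : 1/2 < x) :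
    Psi =ᶠ[nhds x] fun y => Real.exp (1 - 1/(2*y - 1)^2) := by
  filter_upwards [(isOpen_lt continuous_const continuous_id).mem_nhds hx] with y hy
  have hy' : ¬ y ≤ 1/2 := not_le.mpr hy
  unfold Psi; rw [if_neg hy']

lemma psi_hasDerivAt {x : ℝ} (hx : 1/2 < x) :
    HasDerivAt Psi (4/(2*x-1)^3 * Psi x) x := by
  have hu : (2*x - 1) ≠ 0 := by nlinarith
  have h1 : HasDerivAt (fun y : ℝ => 2*y - 1) 2 x := by
    simpa using ((hasDerivAt_id x).const_mul 2).sub_const 1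
  have h2 := (h1.pow 2).inv (pow_ne_zero 2 hu)
  have h3 := (h2.const_sub 1).exp
  have hP : Psi x = Real.exp (1 - 1/(2*x-1)^2) := by
    have hx' : ¬ x ≤ 1/2 := not_le.mpr hx
    unfold Psi; rw [if_neg hx']
  have h4 : HasDerivAt (fun y : ℝ => Real.exp (1 - 1/(2*y-1)^2))
      (4/(2*x-1)^3 * Psi x) x := by
    simp only [one_div]
    convert h3 using 1
    · rfl
    rw [hP, one_div]
    simp only [Pi.pow_apply, Pi.inv_apply]
    field_simp
    ring
  exact h4.congr_of_eventuallyEq (psi_ev hx)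

lemma icc_range (n : ℕ) (f : ℕ → ℝ) :
    ∑ i ∈ Finset.Icc 1 n, f i = ∑ j ∈ Finset.range n, f (1+j) := by
  rw [← Finset.Ico_add_one_right_eq_Icc, Finset.sum_Ico_eq_sum_range]
  simp

lemma sum_id (k : ℕ) (d : ℕ → ℝ) (hd0 : d 0 = 0) (hdk : d (k+1) = 0)
    (u : ℝ) :
    ∑ i ∈ Finset.Icc 1 (k+1), (4 * d (i-1) - 2*((k:ℝ)+2*(i:ℝ)) * d i) / u^((k+1)+2*i)
      = ∑ i ∈ Finset.Icc 1 k, (-2*((k:ℝ)+2*(i:ℝ)) * d i) / u^(k+2*i+1)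
        + (∑ i ∈ Finset.Icc 1 k, d i / u^(k+2*i)) * (4/u^3) := by
  rw [Finset.sum_mul, icc_range, icc_range, icc_range]
  have e1 : ∀ j ∈ Finset.range (k+1),
      (4 * d (1+j-1) - 2*((k:ℝ)+2*(↑(1+j))) * d (1+j)) / u^((k+1)+2*(1+j))
        = 4 * d j / u^((k+1)+2*(1+j)) + (-2*((k:ℝ)+2*(↑(1+j))) * d (1+j)) / u^((k+1)+2*(1+j)) := by
    intro j _
    have h : (1+j-1 : ℕ) = j := by omega
    rw [h]; ring
  rw [Finset.sum_congr rfl e1, Finset.sum_add_distrib, add_comm]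
  congr 1
  · rw [Finset.sum_range_succ]
    have hz : d (1+k) = 0 := by rwa [add_comm]
    rw [hz]
    simp only [mul_zero, zero_div, add_zero]
    apply Finset.sum_congr rfl
    intro j _
    congr 2
    omega
  · rw [Finset.sum_range_succ']
    rw [hd0]
    simp only [mul_zero, zero_div, add_zero]
    apply Finset.sum_congr rfl
    intro j _
    rw [div_mul_div_comm, ← pow_add]
    have h : k + 2*(1+j) + 3 = (k+1) + 2*(1+(j+1)) := by omega
    rw [h]
    ring

lemma bound_step (k i : ℕ) (hi : 1 ≤ i) (d : ℕ → ℝ)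
    (hdb : ∀ j, |d j| ≤ 6^k * (2*(j:ℝ)+(k:ℝ))^k) :
    |4 * d (i-1) - 2*((k:ℝ)+2*(i:ℝ)) * d i| ≤ 6^(k+1) * (2*(i:ℝ)+((k:ℝ)+1))^(k+1) := by
  set B : ℝ := 2*(i:ℝ)+((k:ℝ)+1) with hB
  have hi1 : (1:ℝ) ≤ (i:ℝ) := by exact_mod_cast hi
  have hk0 : (0:ℝ) ≤ (k:ℝ) := Nat.cast_nonneg k
  have hB1 : (1:ℝ) ≤ B := by rw [hB]; linarith
  have hc : (↑(i-1):ℝ) ≤ (i:ℝ) := by exact_mod_cast Nat.sub_le i 1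
  have hc0 : (0:ℝ) ≤ (↑(i-1):ℝ) := Nat.cast_nonneg _
  have h6 : (0:ℝ) < 6^k := by positivity
  have step1 : |4 * d (i-1) - 2*((k:ℝ)+2*(i:ℝ)) * d i|
      ≤ 4 * |d (i-1)| + 2*((k:ℝ)+2*(i:ℝ)) * |d i| := by
    have t := abs_add_le (4 * d (i-1)) (-(2*((k:ℝ)+2*(i:ℝ)) * d i))
    rw [← sub_eq_add_neg, abs_neg, abs_mul, abs_mul] at t
    have h2 : |(4:ℝ)| = 4 := by norm_num
    have h3 : |2*((k:ℝ)+2*(i:ℝ))| = 2*((k:ℝ)+2*(i:ℝ)) := abs_of_nonneg (by linarith)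
    rw [h2, h3] at t
    exact t
  have step2 : 4 * |d (i-1)| + 2*((k:ℝ)+2*(i:ℝ)) * |d i|
      ≤ 4 * (6^k * B^k) + 2*B * (6^k * B^k) := by
    have b1 : |d (i-1)| ≤ 6^k * B^k := by
      refine (hdb (i-1)).trans ?_
      gcongr
      rw [hB]; linarith
    have b2 : |d i| ≤ 6^k * B^k := by
      refine (hdb i).trans ?_
      gcongr
      rw [hB]; linarith
    have hki : (0:ℝ) ≤ 2*((k:ℝ)+2*(i:ℝ)) := by linarith
    have hkiB : 2*((k:ℝ)+2*(i:ℝ)) ≤ 2*B := by rw [hB]; linarith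
    have := mul_le_mul hkiB b2 (abs_nonneg _) (by linarith : (0:ℝ) ≤ 2*B)
    nlinarith [abs_nonneg (d i)]
  have step3 : 4 * (6^k * B^k) + 2*B * (6^k * B^k) ≤ 6^(k+1) * B^(k+1) := by
    rw [pow_succ, pow_succ]
    have hBk : (0:ℝ) < B^k := by positivity
    nlinarith [mul_le_mul_of_nonneg_left hB1 (by positivity : (0:ℝ) ≤ 4*(6^k*B^k))]
  linarith

/-- For every k ≥ 1 there exist coefficients c₁,…,c_k with |c_i| ≤ 6^k·(2i+k)^k such that
for every x > 1/2, Ψ^{(k)}(x) = (Σ_{i=1}^k c_i/(2x−1)^{k+2i})·Ψ(x). -/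
theorem stmt6 (k : ℕ) (hk : 1 ≤ k) :
    ∃ c : ℕ → ℝ,
      (∀ i, 1 ≤ i → i ≤ k → |c i| ≤ 6 ^ k * (2 * (i : ℝ) + (k : ℝ)) ^ k) ∧
      ∀ x : ℝ, 1/2 < x →
        iteratedDeriv k Psi x =
          (∑ i ∈ Finset.Icc 1 k, c i / (2*x - 1) ^ (k + 2*i)) * Psi x := by
  induction k, hk using Nat.le_induction with
  | base =>
    refine ⟨fun _ => 4, ?_, ?_⟩
    · intro i hi1 hi2
      have : i = 1 := le_antisymm hi2 hi1
      subst this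
      norm_num
    · intro x hx
      rw [iteratedDeriv_one, (psi_hasDerivAt hx).deriv]
      rw [Finset.Icc_self, Finset.sum_singleton]
  | succ k hk ih =>
    obtain ⟨c, hc, heq⟩ := ih
    set d : ℕ → ℝ := fun i => if 1 ≤ i ∧ i ≤ k then c i else 0 with hd
    have hd0 : d 0 = 0 := by simp [hd]
    have hdk1 : d (k+1) = 0 := by
      simp only [hd]
      rw [if_neg]
      omega
    have hdb : ∀ j, |d j| ≤ 6^k * (2*(j:ℝ)+(k:ℝ))^k := by
      intro j
      by_cases hj : 1 ≤ j ∧ j ≤ k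
      · simp only [hd, if_pos hj]
        exact hc j hj.1 hj.2
      · simp only [hd, if_neg hj, abs_zero]
        positivity
    have heqd : ∀ y : ℝ, 1/2 < y → iteratedDeriv k Psi y
        = (∑ i ∈ Finset.Icc 1 k, d i / (2*y-1)^(k+2*i)) * Psi y := by
      intro y hy
      rw [heq y hy]
      congr 1
      apply Finset.sum_congr rfl
      intro i hi
      obtain ⟨hi1, hi2⟩ := Finset.mem_Icc.mp hi
      simp [hd, hi1, hi2]
    refine ⟨fun i => 4 * d (i-1) - 2*((k:ℝ)+2*(i:ℝ)) * d i, ?_, ?_⟩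
    · intro i hi1 hi2
      have h := bound_step k i hi1 d hdb
      push_cast
      convert h using 2
    · intro x hx
      have hu : (2*x-1) ≠ 0 := by nlinarith
      have h1 : HasDerivAt (fun y : ℝ => 2*y - 1) 2 x := by
        simpa using ((hasDerivAt_id x).const_mul 2).sub_const 1
      have hEv : iteratedDeriv k Psi =ᶠ[nhds x]
          fun y => (∑ i ∈ Finset.Icc 1 k, d i / (2*y-1)^(k+2*i)) * Psi y := by
        filter_upwards [(isOpen_lt continuous_const continuous_id).mem_nhds hx] with y hy
        exact heqd y hy
      rw [iteratedDeriv_succ, hEv.deriv_eq]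
      have hF : HasDerivAt (fun y => ∑ i ∈ Finset.Icc 1 k, d i / (2*y-1)^(k+2*i))
          (∑ i ∈ Finset.Icc 1 k, (-2*((k:ℝ)+2*(i:ℝ)) * d i) / (2*x-1)^(k+2*i+1)) x := by
        apply HasDerivAt.fun_sum
        intro i hi
        obtain ⟨hi1, _⟩ := Finset.mem_Icc.mp hi
        have hp := ((h1.pow (k+2*i)).inv (pow_ne_zero _ hu)).const_mul (d i)
        have hval : d i * (-(↑(k+2*i) * (2*x-1)^(k+2*i-1) * 2) / ((2*x-1)^(k+2*i))^2)
            = (-2*((k:ℝ)+2*(i:ℝ)) * d i) / (2*x-1)^(k+2*i+1) := by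
          have hsq : ((2*x-1)^(k+2*i))^2 = (2*x-1)^(k+2*i+1) * (2*x-1)^(k+2*i-1) := by
            rw [← pow_mul, ← pow_add]
            congr 1
            omega
          rw [hsq]
          have hne : (2*x-1)^(k+2*i-1) ≠ 0 := pow_ne_zero _ hu
          have hne2 : (2*x-1)^(k+2*i+1) ≠ 0 := pow_ne_zero _ hu
          push_cast
          field_simp
        exact hval ▸ hp
      have hg := hF.fun_mul (psi_hasDerivAt hx)
      rw [hg.deriv]
      have hs := sum_id k d hd0 hdk1 (2*x-1)
      calc (∑ i ∈ Finset.Icc 1 k, (-2*((k:ℝ)+2*(i:ℝ)) * d i) / (2*x-1)^(k+2*i+1)) * Psi x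
            + (∑ i ∈ Finset.Icc 1 k, d i / (2*x-1)^(k+2*i)) * (4/(2*x-1)^3 * Psi x)
          = (∑ i ∈ Finset.Icc 1 (k+1),
              (4 * d (i-1) - 2*((k:ℝ)+2*(i:ℝ)) * d i) / (2*x-1)^((k+1)+2*i)) * Psi x := by
            rw [hs]; ring
        _ = (∑ i ∈ Finset.Icc 1 (k+1),
              (fun i => 4 * d (i-1) - 2*((k:ℝ)+2*(i:ℝ)) * d i) i / (2*x-1)^((k+1)+2*i)) * Psi x := rfl
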